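/- Assign to each variable x_i the weight i. If f is an isobaric homogeneous polynomial of degree n in d variables of weight δ = d - 1, then Hess(f) = λ x_0^{d(n-2)} for some scalar λ ∈ C (possibly zero). -/

import Mathlib

open MvPolynomial

/-- The Hessian determinant: determinant of the matrix of second partial derivatives. -/
noncomputable def hess {d : ℕ} (f : MvPolynomial (Fin d) ℂ) : MvPolynomial (Fin d) ℂ :=
  Matrix.det (Matrix.of fun i j : Fin d => MvPolynomial.pderiv i (MvPolynomial.pderiv j f))

/-- A polynomial is isobaric of weight δ (variable xᵢ having weight i) if every
monomial in its support has weight δ. -/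
def IsIsobaric {d : ℕ} (f : MvPolynomial (Fin d) ℂ) (δ : ℤ) : Prop :=
  ∀ α ∈ f.support, (∑ i : Fin d, (i : ℤ) * α i) = δ

lemma weight_single_one {σ M : Type*} [AddCommMonoid M] (w : σ → M) (i : σ) :
    Finsupp.weight w (Finsupp.single i 1) = w i := by
  rw [Finsupp.weight_apply, Finsupp.sum_single_index] <;> simp

lemma pderiv_isWeightedHomogeneous {σ M : Type*} [AddCancelCommMonoid M]
    {w : σ → M} {f : MvPolynomial σ ℂ} {m m' : M}
    (hf : f.IsWeightedHomogeneous w m) (i : σ) (hm : m' + w i = m) :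
    (pderiv i f).IsWeightedHomogeneous w m' := by
  classical
  intro α hα
  rw [f.as_sum, map_sum, coeff_sum] at hα
  obtain ⟨s, hs, hne⟩ := Finset.exists_ne_zero_of_sum_ne_zero hα
  rw [pderiv_monomial, coeff_monomial] at hne
  split_ifs at hne with h
  · have hsi : s i ≠ 0 := by
      intro h0; rw [h0] at hne; simp at hne
    have hle : Finsupp.single i 1 ≤ s := by
      rw [Finsupp.single_le_iff]; omega
    have hsum : α + Finsupp.single i 1 = s := by
      rw [← h]; exact tsub_add_cancel_of_le hle
    have hws : Finsupp.weight w s = m := hf (by simpa using hs)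
    have : Finsupp.weight w α + w i = m := by
      rw [← weight_single_one w i, ← map_add, hsum, hws]
    rw [← hm] at this
    exact add_right_cancel this
  · exact absurd rfl hne

lemma gauss_fin (d : ℕ) (hd : 0 < d) :
    (∑ i : Fin d, (i : ℤ)) + (∑ i : Fin d, (i : ℤ)) = d * ((d : ℤ) - 1) := by
  have h := Finset.sum_range_id_mul_two d
  have h2 : (∑ i : Fin d, (i : ℤ)) = ∑ i ∈ Finset.range d, (i : ℤ) :=
    Fin.sum_univ_eq_sum_range (fun i => (i : ℤ)) d
  have h3 := congrArg (Nat.cast : ℕ → ℤ) h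
  push_cast [Nat.cast_sub hd] at h3
  rw [h2]; linarith

theorem stmt_4 (d n : ℕ) (hd : 0 < d) (f : MvPolynomial (Fin d) ℂ)
    (hhom : f.IsHomogeneous n) (hiso : IsIsobaric f ((d : ℤ) - 1)) :
    ∃ lam : ℂ, hess f = C lam * X (⟨0, hd⟩ : Fin d) ^ (d * (n - 2)) := by
  classical
  set i0 : Fin d := ⟨0, hd⟩
  rcases lt_or_ge n 2 with hn | hn
  · -- degenerate case: second derivatives vanish
    have hfw1 : f.IsWeightedHomogeneous (fun _ : Fin d => (1 : ℤ)) (n : ℤ) := by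
      intro α hα
      have hdeg := hhom hα
      rw [Finsupp.weight_apply, Finsupp.sum_fintype _ _ (fun i => by simp)] at hdeg ⊢
      simp only [smul_eq_mul, Pi.one_apply, mul_one] at hdeg
      simp only [nsmul_eq_mul, mul_one]
      exact_mod_cast hdeg
    have hzero : ∀ i j : Fin d, pderiv i (pderiv j f) = 0 := by
      intro i j
      have h1 : (pderiv j f).IsWeightedHomogeneous (fun _ : Fin d => (1 : ℤ)) ((n : ℤ) - 1) :=
        pderiv_isWeightedHomogeneous hfw1 j (by ring)
      have h2 : (pderiv i (pderiv j f)).IsWeightedHomogeneous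
          (fun _ : Fin d => (1 : ℤ)) ((n : ℤ) - 2) :=
        pderiv_isWeightedHomogeneous h1 i (by ring)
      ext α
      rw [coeff_zero]
      by_contra hc
      have hα := h2 hc
      rw [Finsupp.weight_apply, Finsupp.sum_fintype _ _ (fun i => by simp)] at hα
      simp only [nsmul_eq_mul, mul_one] at hα
      have hge : (0 : ℤ) ≤ ∑ i : Fin d, (α i : ℤ) :=
        Finset.sum_nonneg fun i _ => by positivity
      omega
    refine ⟨0, ?_⟩
    have hz : hess f = 0 := by
      rw [hess]
      have : (Matrix.of fun i j : Fin d => pderiv i (pderiv j f)) = 0 := by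
        ext i j; simp [hzero i j]
      rw [this, @Matrix.det_zero (Fin d) _ _ _ _ ⟨i0⟩]
    simp [hz]
  · obtain ⟨k, rfl⟩ : ∃ k, n = k + 2 := ⟨n - 2, by omega⟩
    have hnk : k + 2 - 2 = k := by omega
    rw [hnk]
    set w : Fin d → ℤ := fun i => (i : ℤ) with hw
    have hfw : f.IsWeightedHomogeneous w ((d : ℤ) - 1) := by
      intro α hα
      have := hiso α (by simpa using hα)
      rw [Finsupp.weight_apply, Finsupp.sum_fintype _ _ (fun i => by simp)]
      rw [← this]
      exact Finset.sum_congr rfl fun i _ => by push_cast [hw]; ring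
    have hentry_w : ∀ i j : Fin d, (pderiv i (pderiv j f)).IsWeightedHomogeneous w
        ((d : ℤ) - 1 - (j : ℤ) - (i : ℤ)) := by
      intro i j
      have h1 : (pderiv j f).IsWeightedHomogeneous w ((d : ℤ) - 1 - (j : ℤ)) :=
        pderiv_isWeightedHomogeneous hfw j (by simp only [hw]; ring)
      exact pderiv_isWeightedHomogeneous h1 i (by simp only [hw]; ring)
    have hentry_h : ∀ i j : Fin d, (pderiv i (pderiv j f)).IsHomogeneous k := by
      intro i j
      have h1 : (pderiv j f).IsHomogeneous (k + 1) :=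
        pderiv_isWeightedHomogeneous hhom j (by simp [Pi.one_apply])
      exact pderiv_isWeightedHomogeneous h1 i (by simp [Pi.one_apply])
    have hdet_mem : hess f ∈ (weightedHomogeneousSubmodule ℂ w 0) ⊓
        (homogeneousSubmodule (Fin d) ℂ (d * k)) := by
      rw [hess, Matrix.det_apply]
      apply Submodule.sum_mem
      intro σ _
      have hprod_w : (∏ i : Fin d, pderiv (σ i) (pderiv i f)).IsWeightedHomogeneous w 0 := by
        have := IsWeightedHomogeneous.prod Finset.univ
          (fun i : Fin d => pderiv (σ i) (pderiv i f))
          (fun i : Fin d => (d : ℤ) - 1 - (i : ℤ) - ((σ i : Fin d) : ℤ))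
          (fun i _ => hentry_w (σ i) i)
        have hsum : ∑ i : Fin d, ((d : ℤ) - 1 - (i : ℤ) - ((σ i : Fin d) : ℤ)) = 0 := by
          have h1 : ∑ i : Fin d, ((σ i : Fin d) : ℤ) = ∑ i : Fin d, (i : ℤ) :=
            Equiv.sum_comp σ (fun i => (i : ℤ))
          have h2 := gauss_fin d hd
          rw [Finset.sum_sub_distrib, Finset.sum_sub_distrib, h1, Finset.sum_const,
            Finset.card_univ, Fintype.card_fin]
          simp only [nsmul_eq_mul]
          linarith
        rwa [hsum] at this
      have hprod_h : (∏ i : Fin d, pderiv (σ i) (pderiv i f)).IsHomogeneous (d * k) := by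
        have := IsHomogeneous.prod Finset.univ
          (fun i : Fin d => pderiv (σ i) (pderiv i f)) (fun _ => k)
          (fun i _ => hentry_h (σ i) i)
        rwa [Finset.sum_const, Finset.card_univ, Fintype.card_fin, smul_eq_mul] at this
      have hmem : (∏ i : Fin d, pderiv (σ i) (pderiv i f)) ∈
          (weightedHomogeneousSubmodule ℂ w 0) ⊓ (homogeneousSubmodule (Fin d) ℂ (d * k)) :=
        ⟨hprod_w, hprod_h⟩
      have hsm : (Equiv.Perm.sign σ : ℤ) • (∏ i : Fin d, pderiv (σ i) (pderiv i f)) ∈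
          (weightedHomogeneousSubmodule ℂ w 0) ⊓ (homogeneousSubmodule (Fin d) ℂ (d * k)) := by
        rcases Int.units_eq_one_or (Equiv.Perm.sign σ) with h | h <;> rw [h]
        · simpa using hmem
        · simpa using Submodule.neg_mem _ hmem
      simpa [Units.smul_def, Matrix.of_apply] using hsm
    have hdw : (hess f).IsWeightedHomogeneous w 0 := hdet_mem.1
    have hdh : (hess f).IsHomogeneous (d * k) := hdet_mem.2
    refine ⟨coeff (Finsupp.single i0 (d * k)) (hess f), ?_⟩
    ext β
    rw [coeff_C_mul, coeff_X_pow]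
    by_cases hβ : Finsupp.single i0 (d * k) = β
    · rw [if_pos hβ, mul_one, hβ]
    · rw [if_neg hβ, mul_zero]
      by_contra hc
      apply hβ
      have h0 := hdw hc
      have h1 := hdh hc
      rw [Finsupp.weight_apply, Finsupp.sum_fintype _ _ (fun i => by simp)] at h0
      rw [Finsupp.weight_apply, Finsupp.sum_fintype _ _ (fun i => by simp)] at h1
      simp only [smul_eq_mul, Pi.one_apply, mul_one] at h1
      have hz : ∀ i : Fin d, i ≠ i0 → β i = 0 := by
        intro i hi
        have hnn : ∀ j ∈ Finset.univ, (0 : ℤ) ≤ (β j) • w j := by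
          intro j _
          simp only [hw, smul_eq_mul]
          positivity
        have hzi := (Finset.sum_eq_zero_iff_of_nonneg hnn).mp h0 i (Finset.mem_univ i)
        have hiv : w i ≠ 0 := by
          simp only [hw, ne_eq, Nat.cast_eq_zero]
          intro h
          exact hi (Fin.ext h)
        simpa [smul_eq_mul, hiv] using hzi
      ext j
      rcases eq_or_ne j i0 with hj | hj
      · rw [hj, Finsupp.single_eq_same, ← h1,
          Finset.sum_eq_single i0 (fun b _ hb => hz b hb) (by simp)]
      · rw [Finsupp.single_eq_of_ne hj, hz j hj]
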